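/- For a function f : Z_k^n → Z_k with 2 ≤ ess(f) = n ≤ k, the cmr-complexity satisfies n(n−1)/2 ≤ cmr(f) ≤ n!·(n−1)!/2^{n−2}. -/

import Mathlib

open scoped Classical

/-- Variable `i` is essential in `f`. -/
def Essential {n k : ℕ} (f : (Fin n → ZMod k) → ZMod k) (i : Fin n) : Prop :=
  ∃ a b : Fin n → ZMod k, (∀ j : Fin n, j ≠ i → a j = b j) ∧ f a ≠ f b

/-- The number of essential variables of `f`. -/
noncomputable def ess {n k : ℕ} (f : (Fin n → ZMod k) → ZMod k) : ℕ :=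
  Nat.card {i : Fin n // Essential f i}

/-- The subfunction of `f` obtained by fixing the variables in `S` to the values given by `c`. -/
def restrictF {n k : ℕ} (f : (Fin n → ZMod k) → ZMod k) (S : Finset (Fin n))
    (c : Fin n → ZMod k) : (Fin n → ZMod k) → ZMod k :=
  fun a => f (fun j => if j ∈ S then c j else a j)

/-- `M` is a separable set of variables in `f`: some subfunction of `f` has exactly `M`
as its set of essential variables. -/
def Separable {n k : ℕ} (f : (Fin n → ZMod k) → ZMod k) (M : Set (Fin n)) : Prop :=
  M.Nonempty ∧ ∃ (S : Finset (Fin n)) (c : Fin n → ZMod k),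
    {i | Essential (restrictF f S c) i} = M

/-- The identification minor `f_{i←j}`: replace variable `x_i` by `x_j`. -/
def ident {n k : ℕ} (f : (Fin n → ZMod k) → ZMod k) (i j : Fin n) :
    (Fin n → ZMod k) → ZMod k :=
  fun a => f (Function.update a i (a j))

/-- `h` is a simple identification minor of `f` (written `f ▷ h`). -/
def SimpleMinor {n k : ℕ} (f h : (Fin n → ZMod k) → ZMod k) : Prop :=
  ∃ i j : Fin n, i ≠ j ∧ Essential f i ∧ Essential f j ∧ h = ident f i j

/-- The essential arity gap of `f`. -/
noncomputable def gap {n k : ℕ} (f : (Fin n → ZMod k) → ZMod k) : ℕ :=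
  ess f - sSup {m | ∃ h, SimpleMinor f h ∧ m = ess h}

/-- Auxiliary fuelled version of the `cmr`-complexity; the fuel `ess f` suffices since
each identification strictly decreases the number of essential variables. -/
noncomputable def cmrAux {n k : ℕ} : ℕ → ((Fin n → ZMod k) → ZMod k) → ℕ
  | 0, _ => 1
  | m + 1, f =>
    if ess f ≤ 1 then 1
    else if ess f = 2 then 2
    else ∑ p ∈ Finset.univ.filter
        (fun p : Fin n × Fin n => p.2 < p.1 ∧ Essential f p.1 ∧ Essential f p.2),
      cmrAux m (ident f p.1 p.2)

/-- The `cmr`-complexity of `f`. -/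
noncomputable def cmr {n k : ℕ} (f : (Fin n → ZMod k) → ZMod k) : ℕ :=
  cmrAux (ess f) f

/-- Auxiliary fuelled version of `cmr`-equivalence. -/
noncomputable def cmrEquivAux {n k : ℕ} :
    ℕ → ((Fin n → ZMod k) → ZMod k) → ((Fin n → ZMod k) → ZMod k) → Prop
  | 0, f, g => ess f = ess g
  | m + 1, f, g => ess f = ess g ∧ (2 ≤ ess f →
      ∃ σ : Equiv.Perm (Fin n), ∀ i j : Fin n, j < i → Essential f i → Essential f j →
        cmrEquivAux m (ident f i j) (ident g (σ i) (σ j)))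

/-- `cmr`-equivalence of functions. -/
noncomputable def cmrEquiv {n k : ℕ} (f g : (Fin n → ZMod k) → ZMod k) : Prop :=
  cmrEquivAux (ess f) f g

/-! ### Auxiliary lemmas -/

lemma ess_eq_card {n k : ℕ} (f : (Fin n → ZMod k) → ZMod k) :
    ess f = (Finset.univ.filter (Essential f)).card := by
  rw [ess, Nat.card_eq_fintype_card, Fintype.card_subtype]

lemma ess_all {n k : ℕ} (f : (Fin n → ZMod k) → ZMod k) (h : ess f = n) (i : Fin n) :
    Essential f i := by
  rw [ess_eq_card] at h
  have huniv : Finset.univ.filter (Essential f) = Finset.univ :=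
    Finset.eq_univ_of_card _ (by rw [h, Fintype.card_fin])
  have hi : i ∈ Finset.univ.filter (Essential f) := by
    rw [huniv]; exact Finset.mem_univ i
  exact (Finset.mem_filter.mp hi).2

lemma not_essential_ident {n k : ℕ} (f : (Fin n → ZMod k) → ZMod k) {i j : Fin n}
    (hij : i ≠ j) : ¬ Essential (ident f i j) i := by
  rintro ⟨a, b, hab, hne⟩
  apply hne
  simp only [ident]
  congr 1
  funext l
  by_cases hl : l = i
  · subst hl
    simp [hab j (Ne.symm hij)]
  · simp [Function.update_of_ne hl, hab l hl]

lemma essential_ident_of {n k : ℕ} (f : (Fin n → ZMod k) → ZMod k) {i j l : Fin n}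
    (hli : l ≠ i) (hlj : l ≠ j) (h : Essential (ident f i j) l) : Essential f l := by
  obtain ⟨a, b, hab, hne⟩ := h
  refine ⟨Function.update a i (a j), Function.update b i (b j), ?_, hne⟩
  intro m hm
  by_cases hmi : m = i
  · subst hmi
    simp [hab j (Ne.symm hlj)]
  · simp [Function.update_of_ne hmi, hab m hm]

lemma ess_ident_le {n k : ℕ} (f : (Fin n → ZMod k) → ZMod k) {i j : Fin n}
    (hi : Essential f i) (hj : Essential f j) (hij : i ≠ j) :
    ess (ident f i j) ≤ ess f - 1 := by
  rw [ess_eq_card, ess_eq_card]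
  have hsub : Finset.univ.filter (Essential (ident f i j)) ⊆
      (Finset.univ.filter (Essential f)).erase i := by
    intro l hl
    have hl' := (Finset.mem_filter.mp hl).2
    have hli : l ≠ i := by rintro rfl; exact not_essential_ident f hij hl'
    refine Finset.mem_erase.mpr ⟨hli, Finset.mem_filter.mpr ⟨Finset.mem_univ _, ?_⟩⟩
    by_cases hlj : l = j
    · subst hlj; exact hj
    · exact essential_ident_of f hli hlj hl'
  calc (Finset.univ.filter (Essential (ident f i j))).card
      ≤ ((Finset.univ.filter (Essential f)).erase i).card := Finset.card_le_card hsub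
    _ = (Finset.univ.filter (Essential f)).card - 1 :=
        Finset.card_erase_of_mem (Finset.mem_filter.mpr ⟨Finset.mem_univ _, hi⟩)

lemma card_pairs {n : ℕ} (E : Finset (Fin n)) :
    ((E ×ˢ E).filter (fun p => p.2 < p.1)).card * 2 = E.card * (E.card - 1) := by
  have hswap : ((E ×ˢ E).filter (fun p => p.2 < p.1)).card
      = ((E ×ˢ E).filter (fun p => p.1 < p.2)).card := by
    apply Finset.card_nbij' Prod.swap Prod.swap
    · intro p hp
      simp only [Finset.mem_coe, Finset.mem_filter, Finset.mem_product] at *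
      exact ⟨⟨hp.1.2, hp.1.1⟩, hp.2⟩
    · intro p hp
      simp only [Finset.mem_coe, Finset.mem_filter, Finset.mem_product] at *
      exact ⟨⟨hp.1.2, hp.1.1⟩, hp.2⟩
    · intro p _; simp
    · intro p _; simp
  have hunion : ((E ×ˢ E).filter (fun p => p.2 < p.1)) ∪
      ((E ×ˢ E).filter (fun p => p.1 < p.2)) = E.offDiag := by
    ext p
    simp only [Finset.mem_union, Finset.mem_filter, Finset.mem_product, Finset.mem_offDiag]
    constructor
    · rintro (⟨⟨h1, h2⟩, h3⟩ | ⟨⟨h1, h2⟩, h3⟩)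
      · exact ⟨h1, h2, ne_of_gt h3⟩
      · exact ⟨h1, h2, ne_of_lt h3⟩
    · rintro ⟨h1, h2, h3⟩
      rcases lt_or_gt_of_ne h3 with h | h
      · exact Or.inr ⟨⟨h1, h2⟩, h⟩
      · exact Or.inl ⟨⟨h1, h2⟩, h⟩
  have hdisj : Disjoint ((E ×ˢ E).filter (fun p => p.2 < p.1))
      ((E ×ˢ E).filter (fun p => p.1 < p.2)) := by
    rw [Finset.disjoint_left]
    intro p hp hq
    have h1 := (Finset.mem_filter.mp hp).2
    have h2 := (Finset.mem_filter.mp hq).2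
    exact absurd h2 (not_lt.mpr h1.le)
  have hcard := Finset.card_union_of_disjoint hdisj
  rw [hunion, Finset.offDiag_card, ← hswap] at hcard
  have : E.card * (E.card - 1) = E.card * E.card - E.card := by
    cases E.card with
    | zero => simp
    | succ c => simp [Nat.succ_sub_one, Nat.mul_succ, Nat.succ_mul]
  omega

lemma cmrAux_eval {n k : ℕ} (m : ℕ) (g : (Fin n → ZMod k) → ZMod k) (hm : 1 ≤ m) :
    cmrAux m g = if ess g ≤ 1 then 1
      else if ess g = 2 then 2
      else ∑ p ∈ Finset.univ.filter
          (fun p : Fin n × Fin n => p.2 < p.1 ∧ Essential g p.1 ∧ Essential g p.2),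
        cmrAux (m - 1) (ident g p.1 p.2) := by
  obtain ⟨m', rfl⟩ : ∃ m', m = m' + 1 := ⟨m - 1, by omega⟩
  simp [cmrAux]

lemma cmrAux_pos {n k : ℕ} : ∀ (m : ℕ) (g : (Fin n → ZMod k) → ZMod k), 1 ≤ cmrAux m g := by
  intro m
  induction m with
  | zero => intro g; simp [cmrAux]
  | succ m ih =>
    intro g
    rw [cmrAux]
    split_ifs with h1 h2
    · exact le_refl 1
    · omega
    · have h3 : 3 ≤ ess g := by omega
      rw [ess_eq_card] at h3
      obtain ⟨i, hi, j, hj, hne⟩ := Finset.one_lt_card.mp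
        (by omega : 1 < (Finset.univ.filter (Essential g)).card)
      have hi' := (Finset.mem_filter.mp hi).2
      have hj' := (Finset.mem_filter.mp hj).2
      rcases lt_or_gt_of_ne hne with hlt | hlt
      · calc 1 ≤ cmrAux m (ident g j i) := ih _
          _ ≤ _ := Finset.single_le_sum
              (f := fun p : Fin n × Fin n => cmrAux m (ident g p.1 p.2))
              (fun p _ => Nat.zero_le _)
              (Finset.mem_filter.mpr ⟨Finset.mem_univ ((j, i) : Fin n × Fin n), hlt, hj', hi'⟩)
      · calc 1 ≤ cmrAux m (ident g i j) := ih _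
          _ ≤ _ := Finset.single_le_sum
              (f := fun p : Fin n × Fin n => cmrAux m (ident g p.1 p.2))
              (fun p _ => Nat.zero_le _)
              (Finset.mem_filter.mpr ⟨Finset.mem_univ ((i, j) : Fin n × Fin n), hlt, hi', hj'⟩)

/-- The exact value of `cmr` on a function with `s` essential variables. -/
def T : ℕ → ℕ
  | 0 => 1
  | 1 => 1
  | 2 => 2
  | (t + 3) => ((t + 3) * (t + 2) / 2) * T (t + 2)

lemma T_le_succ (s : ℕ) : T s ≤ T (s + 1) := by
  match s with
  | 0 => simp [T]
  | 1 => simp [T]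
  | (t + 2) =>
    rw [show t + 2 + 1 = t + 3 from rfl, T]
    have h1 : 1 ≤ (t + 3) * (t + 2) / 2 := by
      have : 2 ≤ (t + 3) * (t + 2) := by nlinarith
      omega
    calc T (t + 2) = 1 * T (t + 2) := (one_mul _).symm
      _ ≤ ((t + 3) * (t + 2) / 2) * T (t + 2) := Nat.mul_le_mul_right _ h1

lemma T_mono : Monotone T := monotone_nat_of_le_succ T_le_succ

lemma T_pos (s : ℕ) : 1 ≤ T s := by
  calc 1 = T 0 := rfl
    _ ≤ T s := T_mono (Nat.zero_le s)

lemma T_fact_aux : ∀ t : ℕ, 2 ^ t * T (t + 2) = (t + 2).factorial * (t + 1).factorial := by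
  intro t
  induction t with
  | zero => simp [T]
  | succ t ih =>
    obtain ⟨c, hc⟩ := Nat.even_mul_succ_self (t + 2)
    have hc2 : (t + 3) * (t + 2) = 2 * c := by
      rw [mul_comm (t + 3) (t + 2)]
      rw [show t + 2 + 1 = t + 3 from rfl] at hc
      linarith
    have hdiv : (t + 3) * (t + 2) / 2 = c := by
      rw [hc2, Nat.mul_div_cancel_left c (by norm_num)]
    rw [show t + 1 + 2 = t + 3 from rfl, T, hdiv]
    have h1 : 2 ^ (t + 1) * (c * T (t + 2)) = 2 * c * (2 ^ t * T (t + 2)) := by ring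
    rw [h1, ih, ← hc2]
    rw [show t + 1 + 1 = t + 2 from rfl, Nat.factorial_succ (t + 2), Nat.factorial_succ (t + 1)]
    ring

lemma T_fact (s : ℕ) (hs : 2 ≤ s) :
    2 ^ (s - 2) * T s = s.factorial * (s - 1).factorial := by
  obtain ⟨t, rfl⟩ : ∃ t, s = t + 2 := ⟨s - 2, by omega⟩
  simpa using T_fact_aux t

lemma cmrAux_le {n k : ℕ} : ∀ (m : ℕ) (g : (Fin n → ZMod k) → ZMod k),
    ess g ≤ m → cmrAux m g ≤ T (ess g) := by
  intro m
  induction m with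
  | zero =>
    intro g hg
    simp only [cmrAux]
    exact T_pos _
  | succ m ih =>
    intro g hg
    rw [cmrAux]
    split_ifs with h1 h2
    · exact T_pos _
    · rw [h2]; exact le_refl 2
    · have h3 : 3 ≤ ess g := by omega
      obtain ⟨t, ht⟩ : ∃ t, ess g = t + 3 := ⟨ess g - 3, by omega⟩
      set F := Finset.univ.filter
        (fun p : Fin n × Fin n => p.2 < p.1 ∧ Essential g p.1 ∧ Essential g p.2) with hF
      have key : ∀ p ∈ F, cmrAux m (ident g p.1 p.2) ≤ T (t + 2) := by
        intro p hp
        obtain ⟨-, hlt, hp1, hp2⟩ := Finset.mem_filter.mp hp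
        have hij : p.1 ≠ p.2 := ne_of_gt hlt
        have hle : ess (ident g p.1 p.2) ≤ t + 2 := by
          have := ess_ident_le g hp1 hp2 hij
          omega
        calc cmrAux m (ident g p.1 p.2) ≤ T (ess (ident g p.1 p.2)) := ih _ (by omega)
          _ ≤ T (t + 2) := T_mono hle
      have hsum : ∑ p ∈ F, cmrAux m (ident g p.1 p.2) ≤ F.card * T (t + 2) := by
        calc ∑ p ∈ F, cmrAux m (ident g p.1 p.2) ≤ F.card • T (t + 2) :=
            Finset.sum_le_card_nsmul F _ _ key
          _ = F.card * T (t + 2) := by rw [smul_eq_mul]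
      have hFeq : F = ((Finset.univ.filter (Essential g)) ×ˢ
          (Finset.univ.filter (Essential g))).filter (fun p => p.2 < p.1) := by
        ext p
        simp only [hF, Finset.mem_filter, Finset.mem_product, Finset.mem_univ, true_and]
        tauto
      have hcard2 : F.card * 2 = (t + 3) * (t + 2) := by
        rw [hFeq, card_pairs, ← ess_eq_card, ht]
        norm_num
      have hFcard : F.card = (t + 3) * (t + 2) / 2 := by
        rw [← hcard2, Nat.mul_div_cancel _ (by norm_num)]
      calc ∑ p ∈ F, cmrAux m (ident g p.1 p.2) ≤ F.card * T (t + 2) := hsum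
        _ = ((t + 3) * (t + 2) / 2) * T (t + 2) := by rw [hFcard]
        _ = T (t + 3) := (by rw [T])
        _ = T (ess g) := by rw [ht]

/-- Bounds for the cmr-complexity: `n(n−1)/2 ≤ cmr f ≤ n!(n−1)!/2^(n−2)`. -/
theorem stmt_8 {n k : ℕ} (hk : 2 ≤ k) (hn : 2 ≤ n) (hnk : n ≤ k)
    (f : (Fin n → ZMod k) → ZMod k) (hess : ess f = n) :
    n * (n - 1) / 2 ≤ cmr f ∧
    cmr f ≤ n.factorial * (n - 1).factorial / 2 ^ (n - 2) := by
  have hall : ∀ i, Essential f i := ess_all f hess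
  constructor
  · -- lower bound
    rcases eq_or_lt_of_le hn with h2 | h3
    · -- n = 2
      subst h2
      norm_num
      calc 1 ≤ cmrAux (ess f) f := cmrAux_pos _ _
        _ = cmr f := rfl
    · -- 3 ≤ n
      rw [cmr, cmrAux_eval (ess f) f (by omega), hess]
      rw [if_neg (by omega), if_neg (by omega)]
      set F := Finset.univ.filter
        (fun p : Fin n × Fin n => p.2 < p.1 ∧ Essential f p.1 ∧ Essential f p.2) with hF
      have hFeq : F = ((Finset.univ : Finset (Fin n)) ×ˢ Finset.univ).filter
          (fun p => p.2 < p.1) := by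
        ext p
        simp only [hF, Finset.mem_filter, Finset.mem_product, Finset.mem_univ, true_and]
        exact ⟨fun h => h.1, fun h => ⟨h, hall _, hall _⟩⟩
      have hcard2 : F.card * 2 = n * (n - 1) := by
        rw [hFeq, card_pairs]
        simp [Finset.card_univ]
      have hFcard : F.card = n * (n - 1) / 2 := by
        rw [← hcard2, Nat.mul_div_cancel _ (by norm_num)]
      calc n * (n - 1) / 2 = F.card := hFcard.symm
        _ = F.card • 1 := by rw [smul_eq_mul, mul_one]
        _ ≤ ∑ p ∈ F, cmrAux (n - 1) (ident f p.1 p.2) :=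
            Finset.card_nsmul_le_sum F _ _ (fun p _ => cmrAux_pos _ _)
  · -- upper bound
    have h1 : cmr f ≤ T n := by
      rw [cmr, hess]
      calc cmrAux n f ≤ T (ess f) := cmrAux_le n f (le_of_eq hess)
        _ = T n := by rw [hess]
    have h2 : n.factorial * (n - 1).factorial / 2 ^ (n - 2) = T n := by
      rw [← T_fact n hn, Nat.mul_div_cancel_left _ (Nat.pow_pos (by norm_num))]
    rw [h2]
    exact h1
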